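/- Pseudo-population factorization for restricted stabilized weights (equation (B.3.1)): Assume (A2′) and (A3′). Then for every a̲, b̲ ∈ {0,1}^m and every Borel set B ⊆ ℝ: 𝔼[W_rsw^(m) · 1{Y^{a̲} ∈ B} · 1{A̲(K−m) = b̲}] = P(Y^{a̲} ∈ B) · P(A̲(K−m) = b̲). That is, in the pseudo-population obtained by weighting by W_rsw^(m), the potential outcome Y^{a̲} and the recent treatment history A̲(K−m) are independent, each retaining its original marginal distribution. -/

import Mathlib

open MeasureTheory Finset
open scoped Classical

namespace MSMPaper

noncomputable section

variable {Ω : Type*} [MeasurableSpace Ω] {𝓛 : Type*}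

/-- Conditional probability `P(E | F) = P(E ∩ F) / P(F)` as a real number
(junk value `0` when `P F = 0`). -/
def cP (P : Measure Ω) (E F : Set Ω) : ℝ := (P (E ∩ F)).toReal / (P F).toReal

variable {K : ℕ}

/-- Event `Ā(t−1) = b̄` (treatment history up to, not including, time `t`). -/
def Apast (A : Fin K → Ω → Bool) (t : ℕ) (b : Fin K → Bool) : Set Ω :=
  {ω | ∀ k : Fin K, (k : ℕ) < t → A k ω = b k}

/-- Event `L̄(t) = l̄` (covariate history up to and including time `t`). -/
def Lpast (L : Fin K → Ω → 𝓛) (t : ℕ) (l : Fin K → 𝓛) : Set Ω :=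
  {ω | ∀ k : Fin K, (k : ℕ) ≤ t → L k ω = l k}

/-- Event `A̲(s, t−1) = b` (treatment history from time `s` up to, not including, `t`). -/
def Aseg (A : Fin K → Ω → Bool) (s t : ℕ) (b : Fin K → Bool) : Set Ω :=
  {ω | ∀ k : Fin K, s ≤ (k : ℕ) → (k : ℕ) < t → A k ω = b k}

/-- Event `A̲(K−m) = a̲` for a (last-`m`) treatment vector `as`. -/
def EtrV (A : Fin K → Ω → Bool) (m : ℕ) (as : Fin K → Bool) : Set Ω :=
  {ω | ∀ k : Fin K, K - m ≤ (k : ℕ) → A k ω = as k}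

/-- Event `A̲(K−m) = a_m` (constant `a` on the last `m` coordinates). -/
def Etr (A : Fin K → Ω → Bool) (m : ℕ) (a : Bool) : Set Ω :=
  EtrV A m (fun _ => a)

/-- Stabilized weights `W_sw`. -/
def Wsw (P : Measure Ω) (A : Fin K → Ω → Bool) (L : Fin K → Ω → 𝓛) : Ω → ℝ :=
  fun ω => ∏ k : Fin K,
    cP P {ω' | A k ω' = A k ω} (Apast A (k : ℕ) (fun j => A j ω)) /
      cP P {ω' | A k ω' = A k ω}
        (Lpast L (k : ℕ) (fun j => L j ω) ∩ Apast A (k : ℕ) (fun j => A j ω))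

/-- Restricted stabilized weights `W_rsw^(m)`. -/
def Wrsw (P : Measure Ω) (A : Fin K → Ω → Bool) (L : Fin K → Ω → 𝓛) (m : ℕ) : Ω → ℝ :=
  fun ω => ∏ k ∈ Finset.univ.filter (fun k : Fin K => K - m ≤ (k : ℕ)),
    cP P {ω' | A k ω' = A k ω} (Aseg A (K - m) (k : ℕ) (fun j => A j ω)) /
      cP P {ω' | A k ω' = A k ω}
        (Lpast L (k : ℕ) (fun j => L j ω) ∩ Apast A (k : ℕ) (fun j => A j ω))

/-- Partial stabilized weights `W_psw^(m)`. -/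
def Wpsw (P : Measure Ω) (A : Fin K → Ω → Bool) (L : Fin K → Ω → 𝓛) (m : ℕ) : Ω → ℝ :=
  fun ω => ∏ k ∈ Finset.univ.filter (fun k : Fin K => K - m ≤ (k : ℕ)),
    cP P {ω' | A k ω' = A k ω} (Apast A (k : ℕ) (fun j => A j ω)) /
      cP P {ω' | A k ω' = A k ω}
        (Lpast L (k : ℕ) (fun j => L j ω) ∩ Apast A (k : ℕ) (fun j => A j ω))

/-- IP-weighted contrast `θ_W^(m)`. -/
def θW (P : Measure Ω) (A : Fin K → Ω → Bool) (m : ℕ) (W Y : Ω → ℝ) : ℝ :=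
  (∫ ω in Etr A m true, W ω * Y ω ∂P) / (∫ ω in Etr A m true, W ω ∂P) -
    (∫ ω in Etr A m false, W ω * Y ω ∂P) / (∫ ω in Etr A m false, W ω ∂P)

/-- `rev j` is the time index `K − 1 − j`; the paper's coefficient `ψ_{j+1}`
multiplies `a(K − (j+1)) = a(rev j)`. -/
def rev (j : Fin K) : Fin K := ⟨K - 1 - (j : ℕ), by have := j.isLt; omega⟩

/-- `θ^(K) = 𝔼[Y^{1_K}] − 𝔼[Y^{0_K}]`. -/
def θKfull (P : Measure Ω) (Ypot : (Fin K → Bool) → Ω → ℝ) : ℝ :=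
  (∫ ω, Ypot (fun _ => true) ω ∂P) - ∫ ω, Ypot (fun _ => false) ω ∂P

/-- (A1) consistency. -/
def A1ok (A : Fin K → Ω → Bool) (Y : Ω → ℝ) (Ypot : (Fin K → Bool) → Ω → ℝ) : Prop :=
  ∀ (a : Fin K → Bool) (ω : Ω), (∀ k, A k ω = a k) → Y ω = Ypot a ω

/-- (A2) sequential exchangeability. -/
def A2ok (P : Measure Ω) (A : Fin K → Ω → Bool) (L : Fin K → Ω → 𝓛)
    (Ypot : (Fin K → Bool) → Ω → ℝ) : Prop :=
  ∀ (t : Fin K) (a : Fin K → Bool) (B : Set ℝ), MeasurableSet B →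
    ∀ (av : Bool) (l : Fin K → 𝓛) (b : Fin K → Bool),
      0 < P (Lpast L (t : ℕ) l ∩ Apast A (t : ℕ) b) →
      cP P ({ω | Ypot a ω ∈ B} ∩ {ω | A t ω = av}) (Lpast L (t : ℕ) l ∩ Apast A (t : ℕ) b) =
        cP P {ω | Ypot a ω ∈ B} (Lpast L (t : ℕ) l ∩ Apast A (t : ℕ) b) *
          cP P {ω | A t ω = av} (Lpast L (t : ℕ) l ∩ Apast A (t : ℕ) b)

/-- (A3) positivity. -/
def A3ok (P : Measure Ω) (A : Fin K → Ω → Bool) (L : Fin K → Ω → 𝓛) : Prop :=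
  ∀ (t : Fin K) (av : Bool) (l : Fin K → 𝓛) (b : Fin K → Bool),
    0 < P (Lpast L (t : ℕ) l ∩ Apast A (t : ℕ) b) →
    0 < cP P {ω | A t ω = av} (Lpast L (t : ℕ) l ∩ Apast A (t : ℕ) b)

/-- The marginal structural model `𝔼[Y^{ā}] = ψ₀ + Σ_{j=1}^K ψ_j a(K−j)`;
here `ψ j` is the paper's `ψ_{j+1}`, the coefficient of `a(K−1−j)`. -/
def MSMeq (P : Measure Ω) (Ypot : (Fin K → Bool) → Ω → ℝ) (ψ0 : ℝ) (ψ : Fin K → ℝ) : Prop :=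
  ∀ a : Fin K → Bool,
    (∫ ω, Ypot a ω ∂P) = ψ0 + ∑ j : Fin K, ψ j * (if a (rev j) = true then 1 else 0)

/-- (A5) conditional MSM given the past treatment history `Ā(K−m−1)`. -/
def A5ok (P : Measure Ω) (A : Fin K → Ω → Bool) (Ypot : (Fin K → Bool) → Ω → ℝ)
    (m : ℕ) : Prop :=
  ∀ b : Fin K → Bool, 0 < P (Apast A (K - m) b) →
    ∃ (φ0 : ℝ) (φ : Fin K → ℝ), ∀ a : Fin K → Bool,
      (∫ ω in Apast A (K - m) b, Ypot a ω ∂P) / (P (Apast A (K - m) b)).toReal =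
        φ0 + ∑ j : Fin K, φ j * (if a (rev j) = true then 1 else 0)

/-- `q_{j+1} = P(A(K−1−j)=1 | A̲(K−m)=1_m) − P(A(K−1−j)=1 | A̲(K−m)=0_m)`. -/
def qcoef (P : Measure Ω) (A : Fin K → Ω → Bool) (m : ℕ) (j : Fin K) : ℝ :=
  cP P {ω | A (rev j) ω = true} (Etr A m true) -
    cP P {ω | A (rev j) ω = true} (Etr A m false)

end

noncomputable section

variable {Ω : Type*} [MeasurableSpace Ω] {K : ℕ}

/-- `Y^{a̲}(ω) = Y^{(Ā(K−m−1)(ω), a̲)}(ω)`. -/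
def Ypotm (A : Fin K → Ω → Bool) (m : ℕ) (Ypot : (Fin K → Bool) → Ω → ℝ)
    (as : Fin K → Bool) : Ω → ℝ :=
  fun ω => Ypot (fun k => if (k : ℕ) < K - m then A k ω else as k) ω

end


section auxlemmas

variable {Ω : Type*} [MeasurableSpace Ω] {𝓛 : Type*} {K : ℕ}

lemma measurableSet_Ak {A : Fin K → Ω → Bool} (hA : ∀ k, Measurable (A k)) (k : Fin K) (v : Bool) :
    MeasurableSet {ω | A k ω = v} := (hA k) (measurableSet_singleton v)

lemma measurableSet_Apast {A : Fin K → Ω → Bool} (hA : ∀ k, Measurable (A k)) (t : ℕ)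
    (b : Fin K → Bool) : MeasurableSet (Apast A t b) := by
  have h : Apast A t b = ⋂ k : Fin K, {ω | (k:ℕ) < t → A k ω = b k} := by
    ext ω; simp [Apast, Set.mem_iInter]
  rw [h]
  refine MeasurableSet.iInter fun k => ?_
  by_cases h' : (k:ℕ) < t
  · simp only [h', forall_true_left]; exact measurableSet_Ak hA k (b k)
  · simp [h']

lemma measurableSet_Lpast [MeasurableSpace 𝓛] [MeasurableSingletonClass 𝓛]
    {L : Fin K → Ω → 𝓛} (hL : ∀ k, Measurable (L k)) (t : ℕ) (l : Fin K → 𝓛) :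
    MeasurableSet (Lpast L t l) := by
  have h : Lpast L t l = ⋂ k : Fin K, {ω | (k:ℕ) ≤ t → L k ω = l k} := by
    ext ω; simp [Lpast, Set.mem_iInter]
  rw [h]
  refine MeasurableSet.iInter fun k => ?_
  by_cases h' : (k:ℕ) ≤ t
  · simp only [h', forall_true_left]; exact (hL k) (measurableSet_singleton (l k))
  · simp [h']

lemma EtrV_eq_Aseg (A : Fin K → Ω → Bool) (m : ℕ) (bs : Fin K → Bool) :
    EtrV A m bs = Aseg A (K - m) K bs := by
  ext ω; constructor <;> intro h k
  · intro hk _; exact h k hk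
  · intro hk; exact h k hk k.isLt

lemma Lpast_congr {L : Fin K → Ω → 𝓛} {t : ℕ} {l l' : Fin K → 𝓛}
    (h : ∀ k : Fin K, (k:ℕ) ≤ t → l k = l' k) : Lpast L t l = Lpast L t l' := by
  ext ω; constructor <;> intro hω k hk
  · rw [← h k hk]; exact hω k hk
  · rw [h k hk]; exact hω k hk

lemma Apast_congr {A : Fin K → Ω → Bool} {t : ℕ} {b b' : Fin K → Bool}
    (h : ∀ k : Fin K, (k:ℕ) < t → b k = b' k) : Apast A t b = Apast A t b' := by
  ext ω; constructor <;> intro hω k hk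
  · rw [← h k hk]; exact hω k hk
  · rw [h k hk]; exact hω k hk

lemma Aseg_congr {A : Fin K → Ω → Bool} {s t : ℕ} {b b' : Fin K → Bool}
    (h : ∀ k : Fin K, s ≤ (k:ℕ) → (k:ℕ) < t → b k = b' k) : Aseg A s t b = Aseg A s t b' := by
  ext ω; constructor <;> intro hω k hk hk'
  · rw [← h k hk hk']; exact hω k hk hk'
  · rw [h k hk hk']; exact hω k hk hk'

lemma integral_if_mem (P : Measure Ω) [IsFiniteMeasure P] {S : Set Ω}
    [∀ ω, Decidable (ω ∈ S)] (hS : MeasurableSet S)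
    (c : ℝ) : (∫ ω, (if ω ∈ S then c else 0) ∂P) = c * (P S).toReal := by
  have h : (fun ω => if ω ∈ S then c else 0) = S.indicator (fun _ => c) := by
    funext ω; by_cases hω : ω ∈ S <;> simp [hω]
  rw [h, integral_indicator_const c hS]
  simp [mul_comm, Measure.real]

lemma integrable_if_mem (P : Measure Ω) [IsFiniteMeasure P] {S : Set Ω}
    [∀ ω, Decidable (ω ∈ S)] (hS : MeasurableSet S)
    (c : ℝ) : Integrable (fun ω => if ω ∈ S then c else 0) P := by
  have h : (fun ω => if ω ∈ S then c else 0) = S.indicator (fun _ => c) := by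
    funext ω; by_cases hω : ω ∈ S <;> simp [hω]
  rw [h]; exact (integrable_const c).indicator hS

lemma cP_mul (P : Measure Ω) [IsFiniteMeasure P] {E D : Set Ω} (hD : P D ≠ 0) :
    (P (E ∩ D)).toReal = cP P E D * (P D).toReal := by
  have hD' : (P D).toReal ≠ 0 := ENNReal.toReal_ne_zero.mpr ⟨hD, measure_ne_top P D⟩
  rw [cP, div_mul_cancel₀ _ hD']

lemma step_cancel (P : Measure Ω) [IsFiniteMeasure P] {E F D : Set Ω} (hD : P D ≠ 0)
    (hsplit : cP P (E ∩ F) D = cP P E D * cP P F D) (hpos : 0 < cP P F D) :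
    (cP P F D)⁻¹ * (P (E ∩ F ∩ D)).toReal = (P (E ∩ D)).toReal := by
  rw [cP_mul P hD (E := E ∩ F), hsplit, cP_mul P hD (E := E)]
  field_simp

lemma measurable_Ypotm {A : Fin K → Ω → Bool} (hA : ∀ k, Measurable (A k)) (m : ℕ)
    {Ypot : (Fin K → Bool) → Ω → ℝ} (hYpm : ∀ a, Measurable (Ypot a)) (as : Fin K → Bool) :
    Measurable (Ypotm A m Ypot as) := by
  classical
  have hset : ∀ c : Fin K → Bool,
      MeasurableSet {ω | (fun k : Fin K => if (k:ℕ) < K - m then A k ω else as k) = c} := by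
    intro c
    have h : {ω | (fun k : Fin K => if (k:ℕ) < K - m then A k ω else as k) = c}
        = ⋂ k : Fin K, {ω | (if (k:ℕ) < K - m then A k ω else as k) = c k} := by
      ext ω; simp [funext_iff, Set.mem_iInter]
    rw [h]
    refine MeasurableSet.iInter fun k => ?_
    by_cases h' : (k:ℕ) < K - m
    · simp only [h', if_true]; exact measurableSet_Ak hA k (c k)
    · simp only [h', if_false]
      by_cases h'' : as k = c k <;> simp [h'']
  have h : Ypotm A m Ypot as = fun ω => ∑ c : Fin K → Bool,
      if (fun k : Fin K => if (k:ℕ) < K - m then A k ω else as k) = c then Ypot c ω else 0 := by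
    funext ω
    rw [Finset.sum_ite_eq Finset.univ
      (fun k : Fin K => if (k:ℕ) < K - m then A k ω else as k) (fun c => Ypot c ω)]
    simp [Ypotm]
  rw [h]
  exact Finset.measurable_sum _ fun c _ => Measurable.ite (hset c) (hYpm c) measurable_const

end auxlemmas

/-- Pseudo-population factorization for restricted stabilized weights (equation (B.3.1)):
under (A2′) and (A3′), weighting by `W_rsw^(m)` makes `Y^{a̲}` and `A̲(K−m)` independent,
each with its original marginal distribution. -/
theorem rsw_pseudopopulation_factorization
    {Ω : Type*} [MeasurableSpace Ω] {𝓛 : Type*} [MeasurableSpace 𝓛]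
    [Fintype 𝓛] [Nonempty 𝓛] [MeasurableSingletonClass 𝓛]
    (P : Measure Ω) [IsProbabilityMeasure P]
    {K m : ℕ} (hK : 1 ≤ K) (hm1 : 1 ≤ m) (hmK : m ≤ K)
    (A : Fin K → Ω → Bool) (L : Fin K → Ω → 𝓛)
    (hA : ∀ k, Measurable (A k)) (hL : ∀ k, Measurable (L k))
    (Ypot : (Fin K → Bool) → Ω → ℝ)
    (hYpm : ∀ a, Measurable (Ypot a)) (hYpi : ∀ a, Integrable (Ypot a) P)
    -- (A2′) restricted sequential exchangeability
    (hA2' : ∀ t : Fin K, K - m ≤ (t : ℕ) →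
      ∀ (as : Fin K → Bool) (B : Set ℝ), MeasurableSet B →
      ∀ (av : Bool) (l : Fin K → 𝓛) (b : Fin K → Bool),
        0 < P (Lpast L (t : ℕ) l ∩ Apast A (t : ℕ) b) →
        cP P ({ω | Ypotm A m Ypot as ω ∈ B} ∩ {ω | A t ω = av})
            (Lpast L (t : ℕ) l ∩ Apast A (t : ℕ) b) =
          cP P {ω | Ypotm A m Ypot as ω ∈ B} (Lpast L (t : ℕ) l ∩ Apast A (t : ℕ) b) *
            cP P {ω | A t ω = av} (Lpast L (t : ℕ) l ∩ Apast A (t : ℕ) b))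
    -- (A3′) restricted positivity
    (hA3' : ∀ t : Fin K, K - m ≤ (t : ℕ) →
      ∀ (av : Bool) (l : Fin K → 𝓛) (b : Fin K → Bool),
        0 < P (Lpast L (t : ℕ) l ∩ Apast A (t : ℕ) b) →
        0 < cP P {ω | A t ω = av} (Lpast L (t : ℕ) l ∩ Apast A (t : ℕ) b)) :
    ∀ (as bs : Fin K → Bool) (B : Set ℝ), MeasurableSet B →
      (∫ ω, Wrsw P A L m ω * (if Ypotm A m Ypot as ω ∈ B then (1 : ℝ) else 0) *
          (if ω ∈ EtrV A m bs then (1 : ℝ) else 0) ∂P) =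
        (P {ω | Ypotm A m Ypot as ω ∈ B}).toReal * (P (EtrV A m bs)).toReal := by
  classical
  intro as bs B hB
  set Y : Ω → ℝ := Ypotm A m Ypot as with hYdef
  have hYmeas : Measurable Y := measurable_Ypotm hA m hYpm as
  have hYB : MeasurableSet {ω | Y ω ∈ B} := hYmeas hB
  set d : Fin K → Ω → ℝ := fun k ω =>
    cP P {ω' | A k ω' = A k ω}
      (Lpast L (k : ℕ) (fun j => L j ω) ∩ Apast A (k : ℕ) (fun j => A j ω)) with hd
  -- core induction
  have core : ∀ t : ℕ, K - m ≤ t → t ≤ K →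
      (∫ ω, (∏ k ∈ Finset.univ.filter (fun k : Fin K => K - m ≤ (k : ℕ) ∧ (k : ℕ) < t),
            (d k ω)⁻¹) * (if Y ω ∈ B then (1 : ℝ) else 0) *
          (if ω ∈ Aseg A (K - m) t bs then (1 : ℝ) else 0) ∂P)
        = (P {ω | Y ω ∈ B}).toReal := by
    intro t ht
    induction t, ht using Nat.le_induction with
    | base =>
        intro _
        have h1 : Finset.univ.filter
            (fun k : Fin K => K - m ≤ (k : ℕ) ∧ (k : ℕ) < K - m) = ∅ := by
          ext k
          simp only [Finset.mem_filter, Finset.mem_univ, true_and, Finset.notMem_empty,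
            iff_false]
          omega
        have h2 : Aseg A (K - m) (K - m) bs = Set.univ := by
          ext ω
          simp only [Aseg, Set.mem_setOf_eq, Set.mem_univ, iff_true]
          intro k hk hk'
          omega
        rw [h1, h2]
        simp only [Finset.prod_empty, one_mul, Set.mem_univ, if_true, mul_one]
        simpa using integral_if_mem P hYB 1
    | succ t ht ih =>
        intro htK1
        have IH := ih (by omega)
        have ht' : t < K := by omega
        set τ : Fin K := ⟨t, ht'⟩ with hτ
        obtain ⟨l₀⟩ := ‹Nonempty 𝓛›
        set Ht : Ω → (Fin K → 𝓛) × (Fin K → Bool) := fun ω =>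
          (fun k => if (k : ℕ) ≤ t then L k ω else l₀,
           fun k => if (k : ℕ) < t then A k ω else false) with hHt
        have fiber : ∀ ω₀ : Ω, {ω' | Ht ω' = Ht ω₀}
            = Lpast L t (fun j => L j ω₀) ∩ Apast A t (fun j => A j ω₀) := by
          intro ω₀
          ext ω'
          simp only [hHt, Set.mem_setOf_eq, Prod.mk.injEq, funext_iff, Set.mem_inter_iff,
            Lpast, Apast]
          constructor
          · rintro ⟨h1, h2⟩
            refine ⟨fun k hk => ?_, fun k hk => ?_⟩
            · have := h1 k; rw [if_pos hk, if_pos hk] at this; exact this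
            · have := h2 k; rw [if_pos hk, if_pos hk] at this; exact this
          · rintro ⟨h1, h2⟩
            refine ⟨fun k => ?_, fun k => ?_⟩
            · by_cases hk : (k : ℕ) ≤ t
              · rw [if_pos hk, if_pos hk]; exact h1 k hk
              · rw [if_neg hk, if_neg hk]
            · by_cases hk : (k : ℕ) < t
              · rw [if_pos hk, if_pos hk]; exact h2 k hk
              · rw [if_neg hk, if_neg hk]
        have hist : ∀ ω₀ ω, Ht ω = Ht ω₀ →
            (∀ j : Fin K, (j : ℕ) ≤ t → L j ω = L j ω₀) ∧
            (∀ j : Fin K, (j : ℕ) < t → A j ω = A j ω₀) := by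
          intro ω₀ ω hm'
          have hmem : ω ∈ {ω' | Ht ω' = Ht ω₀} := hm'
          rw [fiber ω₀] at hmem
          exact ⟨hmem.1, hmem.2⟩
        have dcong : ∀ ω₀ ω, Ht ω = Ht ω₀ → ∀ k : Fin K, (k : ℕ) < t → d k ω = d k ω₀ := by
          intro ω₀ ω hm' k hk
          obtain ⟨hLh, hAh⟩ := hist ω₀ ω hm'
          simp only [hd]
          rw [hAh k hk, Lpast_congr (L := L) (fun j hj => hLh j (by omega)),
            Apast_congr (A := A) (fun j hj => hAh j (by omega))]
        have Dcong : ∀ ω₀ ω, Ht ω = Ht ω₀ →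
            Lpast L t (fun j => L j ω) ∩ Apast A t (fun j => A j ω)
              = Lpast L t (fun j => L j ω₀) ∩ Apast A t (fun j => A j ω₀) := by
          intro ω₀ ω hm'
          obtain ⟨hLh, hAh⟩ := hist ω₀ ω hm'
          rw [Lpast_congr (L := L) (fun j hj => hLh j hj),
            Apast_congr (A := A) (fun j hj => hAh j hj)]
        have hτmem : τ ∉ Finset.univ.filter
            (fun k : Fin K => K - m ≤ (k : ℕ) ∧ (k : ℕ) < t) := by
          simp [hτ]
        have hins : Finset.univ.filter (fun k : Fin K => K - m ≤ (k : ℕ) ∧ (k : ℕ) < t + 1)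
            = insert τ (Finset.univ.filter
                (fun k : Fin K => K - m ≤ (k : ℕ) ∧ (k : ℕ) < t)) := by
          ext k
          simp only [Finset.mem_filter, Finset.mem_univ, true_and, Finset.mem_insert, hτ,
            Fin.ext_iff]
          omega
        have hAsegsucc : Aseg A (K - m) (t + 1) bs
            = Aseg A (K - m) t bs ∩ {ω | A τ ω = bs τ} := by
          ext ω
          constructor
          · intro h
            exact ⟨fun k hk hk' => h k hk (by omega), h τ (by simpa [hτ] using ht) (by simp [hτ])⟩
          · rintro ⟨h1, h2⟩
            intro k hk hk'
            by_cases hkt : (k : ℕ) < t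
            · exact h1 k hk hkt
            · have hkτ : k = τ := by
                apply Fin.ext
                simp only [hτ]
                omega
              rw [hkτ]; exact h2
        set G0 : Ω → ℝ := fun ω =>
          (∏ k ∈ Finset.univ.filter (fun k : Fin K => K - m ≤ (k : ℕ) ∧ (k : ℕ) < t),
            (d k ω)⁻¹) * (if Y ω ∈ B then (1 : ℝ) else 0) *
            (if ω ∈ Aseg A (K - m) t bs then (1 : ℝ) else 0) with hG0
        set G1 : Ω → ℝ := fun ω =>
          (∏ k ∈ Finset.univ.filter (fun k : Fin K => K - m ≤ (k : ℕ) ∧ (k : ℕ) < t + 1),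
            (d k ω)⁻¹) * (if Y ω ∈ B then (1 : ℝ) else 0) *
            (if ω ∈ Aseg A (K - m) (t + 1) bs then (1 : ℝ) else 0) with hG1
        have main : ∀ p : (Fin K → 𝓛) × (Fin K → Bool),
            Integrable (fun ω => if Ht ω = p then G1 ω else 0) P ∧
            Integrable (fun ω => if Ht ω = p then G0 ω else 0) P ∧
            (∫ ω, (if Ht ω = p then G1 ω else 0) ∂P)
              = ∫ ω, (if Ht ω = p then G0 ω else 0) ∂P := by
          intro p
          by_cases hnull : P ({ω' | Ht ω' = p} ∩ Aseg A (K - m) t bs) = 0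
          · have hsupp : ∀ ω, ω ∉ ({ω' | Ht ω' = p} ∩ Aseg A (K - m) t bs) →
                (if Ht ω = p then G1 ω else 0) = 0 ∧ (if Ht ω = p then G0 ω else 0) = 0 := by
              intro ω hω
              by_cases hm' : Ht ω = p
              · have hA' : ω ∉ Aseg A (K - m) t bs := fun h => hω ⟨hm', h⟩
                have hA1 : ω ∉ Aseg A (K - m) (t + 1) bs := by
                  intro h; exact hA' (fun k hk hk' => h k hk (by omega))
                constructor
                · rw [if_pos hm', hG1]; simp [hA1]
                · rw [if_pos hm', hG0]; simp [hA']
              · exact ⟨if_neg hm', if_neg hm'⟩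
            have hmost : ∀ᵐ ω ∂P, ω ∉ ({ω' | Ht ω' = p} ∩ Aseg A (K - m) t bs) := by
              rw [ae_iff]
              simpa only [not_not, Set.setOf_mem_eq] using hnull
            have hae1 : (fun ω => if Ht ω = p then G1 ω else 0) =ᵐ[P] 0 := by
              filter_upwards [hmost] with ω hω
              simpa using (hsupp ω hω).1
            have hae0 : (fun ω => if Ht ω = p then G0 ω else 0) =ᵐ[P] 0 := by
              filter_upwards [hmost] with ω hω
              simpa using (hsupp ω hω).2
            exact ⟨(integrable_zero _ _ _).congr hae1.symm,
              (integrable_zero _ _ _).congr hae0.symm,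
              by rw [integral_congr_ae hae1, integral_congr_ae hae0]⟩
          · have hne : ({ω' | Ht ω' = p} ∩ Aseg A (K - m) t bs).Nonempty := by
              rw [Set.nonempty_iff_ne_empty]
              intro h
              rw [h] at hnull
              simp at hnull
            obtain ⟨ω₀, hω₀p, hω₀A⟩ := hne
            have hp : Ht ω₀ = p := hω₀p
            subst hp
            have hfib := fiber ω₀
            set D : Set Ω := Lpast L t (fun j => L j ω₀) ∩ Apast A t (fun j => A j ω₀)
              with hDdef
            have hDmeas : MeasurableSet D :=
              (measurableSet_Lpast hL t _).inter (measurableSet_Apast hA t _)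
            have hDsub : D ⊆ Aseg A (K - m) t bs := by
              intro ω' hω' k hk hk'
              have h := hω'.2 k hk'
              rw [h]
              exact hω₀A k hk hk'
            have hPD : P D ≠ 0 := by
              intro h
              apply hnull
              rw [hfib]
              exact measure_mono_null Set.inter_subset_left h
            have hPDpos : 0 < P D := lt_of_le_of_ne zero_le (Ne.symm hPD)
            have hts : K - m ≤ (τ : ℕ) := by simpa [hτ] using ht
            have hsplit' : cP P ({ω | Y ω ∈ B} ∩ {ω | A τ ω = bs τ}) D
                = cP P {ω | Y ω ∈ B} D * cP P {ω | A τ ω = bs τ} D :=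
              hA2' τ hts as B hB (bs τ) (fun j => L j ω₀) (fun j => A j ω₀) hPDpos
            have hpos' : 0 < cP P {ω | A τ ω = bs τ} D :=
              hA3' τ hts (bs τ) (fun j => L j ω₀) (fun j => A j ω₀) hPDpos
            set c0 : ℝ := ∏ k ∈ Finset.univ.filter
                (fun k : Fin K => K - m ≤ (k : ℕ) ∧ (k : ℕ) < t), (d k ω₀)⁻¹ with hc0
            set dd : ℝ := cP P {ω | A τ ω = bs τ} D with hdd
            have hprodc : ∀ ω, Ht ω = Ht ω₀ →
                (∏ k ∈ Finset.univ.filter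
                  (fun k : Fin K => K - m ≤ (k : ℕ) ∧ (k : ℕ) < t), (d k ω)⁻¹) = c0 := by
              intro ω hm'
              rw [hc0]
              refine Finset.prod_congr rfl fun k hk => ?_
              have hkt : (k : ℕ) < t := (Finset.mem_filter.mp hk).2.2
              rw [dcong ω₀ ω hm' k hkt]
            have e0 : (fun ω => if Ht ω = Ht ω₀ then G0 ω else 0)
                = fun ω => if ω ∈ ({ω | Y ω ∈ B} ∩ D) then c0 else 0 := by
              funext ω
              by_cases hm' : Ht ω = Ht ω₀
              · have hωD : ω ∈ D := by rw [← hfib]; exact hm'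
                have hωA : ω ∈ Aseg A (K - m) t bs := hDsub hωD
                rw [if_pos hm']
                simp only [hG0]
                rw [hprodc ω hm']
                by_cases hYω : Y ω ∈ B
                · rw [if_pos hYω, if_pos hωA, if_pos (Set.mem_inter (show ω ∈ {ω | Y ω ∈ B} from hYω) hωD)]
                  ring
                · rw [if_neg hYω, if_neg (show ω ∉ ({ω | Y ω ∈ B} ∩ D) from
                    fun hc => hYω hc.1)]
                  ring
              · rw [if_neg hm']
                have hωD : ω ∉ D := by rw [← hfib]; exact hm'
                rw [if_neg (show ω ∉ ({ω | Y ω ∈ B} ∩ D) from fun hc => hωD hc.2)]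
            have e1 : (fun ω => if Ht ω = Ht ω₀ then G1 ω else 0)
                = fun ω => if ω ∈ ({ω | Y ω ∈ B} ∩ {ω | A τ ω = bs τ} ∩ D)
                    then c0 * dd⁻¹ else 0 := by
              funext ω
              by_cases hm' : Ht ω = Ht ω₀
              · have hωD : ω ∈ D := by rw [← hfib]; exact hm'
                have hωA : ω ∈ Aseg A (K - m) t bs := hDsub hωD
                rw [if_pos hm']
                simp only [hG1]
                by_cases hAτ : A τ ω = bs τ
                · have hdτ : d τ ω = dd := by
                    simp only [hd, hdd]
                    rw [hAτ, Dcong ω₀ ω hm']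
                  have hωA1 : ω ∈ Aseg A (K - m) (t + 1) bs := by
                    rw [hAsegsucc]; exact ⟨hωA, hAτ⟩
                  rw [hins, Finset.prod_insert hτmem, hdτ, hprodc ω hm']
                  by_cases hYω : Y ω ∈ B
                  · rw [if_pos hYω, if_pos hωA1,
                      if_pos (Set.mem_inter (Set.mem_inter (show ω ∈ {ω | Y ω ∈ B} from hYω) (show ω ∈ {ω | A τ ω = bs τ} from hAτ)) hωD)]
                    ring
                  · rw [if_neg hYω, if_neg (show
                      ω ∉ ({ω | Y ω ∈ B} ∩ {ω | A τ ω = bs τ} ∩ D) from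
                      fun hc => hYω hc.1.1)]
                    ring
                · have hωA1 : ω ∉ Aseg A (K - m) (t + 1) bs := by
                    rw [hAsegsucc]; exact fun hc => hAτ hc.2
                  rw [if_neg hωA1, if_neg (show
                    ω ∉ ({ω | Y ω ∈ B} ∩ {ω | A τ ω = bs τ} ∩ D) from
                    fun hc => hAτ hc.1.2)]
                  ring
              · rw [if_neg hm']
                have hωD : ω ∉ D := by rw [← hfib]; exact hm'
                rw [if_neg (show ω ∉ ({ω | Y ω ∈ B} ∩ {ω | A τ ω = bs τ} ∩ D) from
                  fun hc => hωD hc.2)]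
            have hS1 : MeasurableSet ({ω | Y ω ∈ B} ∩ {ω | A τ ω = bs τ} ∩ D) :=
              (hYB.inter (measurableSet_Ak hA τ (bs τ))).inter hDmeas
            have hS0 : MeasurableSet ({ω | Y ω ∈ B} ∩ D) := hYB.inter hDmeas
            refine ⟨?_, ?_, ?_⟩
            · rw [e1]; exact integrable_if_mem P hS1 _
            · rw [e0]; exact integrable_if_mem P hS0 _
            · rw [e1, e0, integral_if_mem P hS1, integral_if_mem P hS0]
              rw [mul_assoc]
              congr 1
              exact step_cancel P hPD hsplit' hpos'
        show (∫ ω, G1 ω ∂P) = (P {ω | Y ω ∈ B}).toReal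
        calc (∫ ω, G1 ω ∂P)
            = ∫ ω, (∑ p : (Fin K → 𝓛) × (Fin K → Bool),
                if Ht ω = p then G1 ω else 0) ∂P := by
              congr 1
              funext ω
              simp [Finset.sum_ite_eq]
          _ = ∑ p : (Fin K → 𝓛) × (Fin K → Bool),
                ∫ ω, (if Ht ω = p then G1 ω else 0) ∂P :=
              integral_finset_sum _ fun p _ => (main p).1
          _ = ∑ p : (Fin K → 𝓛) × (Fin K → Bool),
                ∫ ω, (if Ht ω = p then G0 ω else 0) ∂P :=
              Finset.sum_congr rfl fun p _ => (main p).2.2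
          _ = ∫ ω, (∑ p : (Fin K → 𝓛) × (Fin K → Bool),
                if Ht ω = p then G0 ω else 0) ∂P :=
              (integral_finset_sum _ fun p _ => (main p).2.1).symm
          _ = ∫ ω, G0 ω ∂P := by
              congr 1
              funext ω
              simp [Finset.sum_ite_eq]
          _ = (P {ω | Y ω ∈ B}).toReal := IH
  -- conclusion from the core identity
  by_cases hpos : ∀ u : ℕ, K - m ≤ u → u ≤ K → P (Aseg A (K - m) u bs) ≠ 0
  · have hfK : Finset.univ.filter (fun k : Fin K => K - m ≤ (k : ℕ))
        = Finset.univ.filter (fun k : Fin K => K - m ≤ (k : ℕ) ∧ (k : ℕ) < K) := by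
      ext k
      simp [k.isLt]
    have tel : ∀ u : ℕ, K - m ≤ u → u ≤ K →
        (∏ k ∈ Finset.univ.filter (fun k : Fin K => K - m ≤ (k : ℕ) ∧ (k : ℕ) < u),
          cP P {ω' | A k ω' = bs k} (Aseg A (K - m) (k : ℕ) bs))
          = (P (Aseg A (K - m) u bs)).toReal := by
      intro u hu
      induction u, hu using Nat.le_induction with
      | base =>
          intro _
          have h1 : Finset.univ.filter
              (fun k : Fin K => K - m ≤ (k : ℕ) ∧ (k : ℕ) < K - m) = ∅ := by
            ext k
            simp only [Finset.mem_filter, Finset.mem_univ, true_and, Finset.notMem_empty,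
              iff_false]
            omega
          have h2 : Aseg A (K - m) (K - m) bs = Set.univ := by
            ext ω
            simp only [Aseg, Set.mem_setOf_eq, Set.mem_univ, iff_true]
            intro k hk hk'
            omega
          rw [h1, h2]
          simp
      | succ u hu ihu =>
          intro huK
          have ihu' := ihu (by omega)
          have hu' : u < K := by omega
          set υ : Fin K := ⟨u, hu'⟩ with hυ
          have hυmem : υ ∉ Finset.univ.filter
              (fun k : Fin K => K - m ≤ (k : ℕ) ∧ (k : ℕ) < u) := by
            simp [hυ]
          have hins : Finset.univ.filter
              (fun k : Fin K => K - m ≤ (k : ℕ) ∧ (k : ℕ) < u + 1)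
              = insert υ (Finset.univ.filter
                  (fun k : Fin K => K - m ≤ (k : ℕ) ∧ (k : ℕ) < u)) := by
            ext k
            simp only [Finset.mem_filter, Finset.mem_univ, true_and, Finset.mem_insert, hυ,
              Fin.ext_iff]
            omega
          have hstep : {ω' | A υ ω' = bs υ} ∩ Aseg A (K - m) u bs
              = Aseg A (K - m) (u + 1) bs := by
            ext ω
            constructor
            · rintro ⟨h2, h1⟩
              intro k hk hk'
              by_cases hku : (k : ℕ) < u
              · exact h1 k hk hku
              · have hkυ : k = υ := by
                  apply Fin.ext
                  simp only [hυ]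
                  omega
                rw [hkυ]; exact h2
            · intro h
              exact ⟨h υ (by simpa [hυ] using hu) (by simp [hυ]),
                fun k hk hk' => h k hk (by omega)⟩
          rw [hins, Finset.prod_insert hυmem, ihu',
            ← cP_mul P (hpos u hu (by omega)), hstep]
    have hN : (∏ k ∈ Finset.univ.filter (fun k : Fin K => K - m ≤ (k : ℕ)),
        cP P {ω' | A k ω' = bs k} (Aseg A (K - m) (k : ℕ) bs))
        = (P (EtrV A m bs)).toReal := by
      rw [hfK, EtrV_eq_Aseg]
      exact tel K (by omega) le_rfl
    have hpt : (fun ω => Wrsw P A L m ω * (if Y ω ∈ B then (1 : ℝ) else 0) *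
          (if ω ∈ EtrV A m bs then (1 : ℝ) else 0))
        = fun ω => (P (EtrV A m bs)).toReal *
            ((∏ k ∈ Finset.univ.filter (fun k : Fin K => K - m ≤ (k : ℕ) ∧ (k : ℕ) < K),
              (d k ω)⁻¹) * (if Y ω ∈ B then (1 : ℝ) else 0) *
              (if ω ∈ Aseg A (K - m) K bs then (1 : ℝ) else 0)) := by
      funext ω
      by_cases hω : ω ∈ EtrV A m bs
      · have hω' : ω ∈ Aseg A (K - m) K bs := by rw [← EtrV_eq_Aseg]; exact hω
        have hW : Wrsw P A L m ω
            = (∏ k ∈ Finset.univ.filter (fun k : Fin K => K - m ≤ (k : ℕ)),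
                cP P {ω' | A k ω' = bs k} (Aseg A (K - m) (k : ℕ) bs))
              * ∏ k ∈ Finset.univ.filter (fun k : Fin K => K - m ≤ (k : ℕ)),
                  (d k ω)⁻¹ := by
          rw [Wrsw, ← Finset.prod_mul_distrib]
          refine Finset.prod_congr rfl fun k hk => ?_
          have hk' : K - m ≤ (k : ℕ) := (Finset.mem_filter.mp hk).2
          have hAk : A k ω = bs k := hω k hk'
          rw [div_eq_mul_inv]
          congr 1
          rw [hAk, Aseg_congr (A := A) (fun j hj hj' => hω j hj)]
        rw [hW, hN, hfK]
        simp only [hω, hω', if_pos]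
        ring
      · have hω' : ω ∉ Aseg A (K - m) K bs := by rw [← EtrV_eq_Aseg]; exact hω
        simp [hω, hω']
    rw [hpt, integral_const_mul, core K (by omega) le_rfl]
    ring
  · push_neg at hpos
    obtain ⟨u, hu1, hu2, hu3⟩ := hpos
    have hEnull : P (EtrV A m bs) = 0 := by
      refine measure_mono_null ?_ hu3
      intro ω hω k hk hk'
      exact hω k hk
    have hzero : (fun ω => Wrsw P A L m ω * (if Y ω ∈ B then (1 : ℝ) else 0) *
        (if ω ∈ EtrV A m bs then (1 : ℝ) else 0)) =ᵐ[P] 0 := by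
      have hmost : ∀ᵐ ω ∂P, ω ∉ EtrV A m bs := by
        rw [ae_iff]
        simpa only [not_not, Set.setOf_mem_eq] using hEnull
      filter_upwards [hmost] with ω hω
      simp [hω]
    rw [integral_congr_ae hzero, hEnull]
    simp


end MSMPaper
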